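/- For every nonnegative integer n, binom(2n+1,n) * C_{n+1} = \sum_{k=0}^{n} (2k+2) / ((2n+2)(2n+3)) * binom(2n+3, n-k) * binom(2n+3, n-k+1). -/

import Mathlib

theorem stmt_8 (n : ℕ) :
    ((2 * n + 1).choose n : ℚ) * catalan (n + 1) =
      ∑ k ∈ Finset.range (n + 1),
        (2 * k + 2 : ℚ) / ((2 * n + 2 : ℚ) * (2 * n + 3)) *
          ((2 * n + 3).choose (n - k)) * ((2 * n + 3).choose (n - k + 1)) := by
  have h2 : ((2 : ℚ) * n + 2) ≠ 0 := by positivity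
  have h3 : ((2 : ℚ) * n + 3) ≠ 0 := by positivity
  set f : ℕ → ℚ := fun j =>
    ((j : ℚ) * (j + 1)) / ((2 * n + 2) * (2 * n + 3) ^ 2) *
      ((2 * n + 3).choose j) * ((2 * n + 3).choose (j + 1)) with hf
  have hsum : (∑ k ∈ Finset.range (n + 1),
        (2 * k + 2 : ℚ) / ((2 * n + 2 : ℚ) * (2 * n + 3)) *
          ((2 * n + 3).choose (n - k)) * ((2 * n + 3).choose (n - k + 1)))
      = f (n + 1) - f 0 := by
    have := Finset.sum_range_sub' (fun k => f (n + 1 - k)) (n + 1)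
    simp only [Nat.sub_self, Nat.sub_zero] at this
    rw [← this]
    apply Finset.sum_congr rfl
    intro k hk
    have hk' : k ≤ n := Nat.lt_succ_iff.mp (Finset.mem_range.mp hk)
    have e1 : n + 1 - k = (n - k) + 1 := by omega
    have e2 : n + 1 - (k + 1) = n - k := by omega
    rw [e1, e2, hf]
    set j := n - k with hj
    have hjn : (j : ℚ) = (n : ℚ) - k := by
      rw [hj]; push_cast [Nat.cast_sub hk']; ring
    have hb' := Nat.choose_succ_right_eq (2 * n + 3) j
    have hc' := Nat.choose_succ_right_eq (2 * n + 3) (j + 1)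
    have hjle : j ≤ 2 * n + 3 := by omega
    have hj1le : j + 1 ≤ 2 * n + 3 := by omega
    have hb : ((2 * n + 3).choose (j + 1) : ℚ) * ((j : ℚ) + 1)
        = ((2 * n + 3).choose j : ℚ) * ((2 * n + 3 : ℚ) - j) := by
      have h := congrArg (fun x : ℕ => (x : ℚ)) hb'
      push_cast [Nat.cast_sub hjle] at h
      linear_combination h
    have hc : ((2 * n + 3).choose (j + 1 + 1) : ℚ) * ((j : ℚ) + 2)
        = ((2 * n + 3).choose (j + 1) : ℚ) * ((2 * n + 2 : ℚ) - j) := by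
      have h := congrArg (fun x : ℕ => (x : ℚ)) hc'
      have hle2 : j ≤ 2 * n + 2 := by omega
      push_cast [Nat.cast_sub hj1le, Nat.cast_sub hle2] at h
      linear_combination h
    have hkq : (k : ℚ) = (n : ℚ) - j := by rw [hjn]; ring
    push_cast [hkq]
    field_simp
    linear_combination (-((j : ℚ) + 1) * ((2 * n + 3).choose (j + 1) : ℚ)) * hc
      - ((2 * (n : ℚ) + 2) - j) * ((2 * n + 3).choose (j + 1) : ℚ) * hb
  rw [hsum]
  have hf0 : f 0 = 0 := by simp [hf]
  rw [hf0, sub_zero]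
  simp only [hf]
  have q1 : (2 * n + 1 + 1) * (2 * n + 1).choose n = (2 * n + 1 + 1).choose (n + 1) * (n + 1) :=
    Nat.add_one_mul_choose_eq (2 * n + 1) n
  have q2 : (2 * n + 2 + 1) * (2 * n + 2).choose (n + 1) = (2 * n + 2 + 1).choose (n + 2) * (n + 2) :=
    Nat.add_one_mul_choose_eq (2 * n + 2) (n + 1)
  have q3 : (2 * n + 3).choose (n + 1) = (2 * n + 3).choose (n + 1 + 1) := by
    have h := Nat.choose_symm (show n + 1 + 1 <= 2 * n + 3 by omega)
    rw [show 2 * n + 3 - (n + 1 + 1) = n + 1 from by omega] at h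
    exact h
  have q4 : (n + 1 + 1) * catalan (n + 1) = (2 * (n + 1)).choose (n + 1) := by
    have h := succ_mul_catalan_eq_centralBinom (n + 1)
    rwa [Nat.centralBinom] at h
  rw [q3]
  rw [show 2 * n + 1 + 1 = 2 * n + 2 from by omega] at q1
  rw [show 2 * n + 2 + 1 = 2 * n + 3 from by omega, show n + 2 = n + 1 + 1 from rfl] at q2
  rw [show 2 * (n + 1) = 2 * n + 2 from by ring] at q4
  have Q1 : ((2 : ℚ) * n + 2) * ((2 * n + 1).choose n : ℚ)
      = ((2 * n + 2).choose (n + 1) : ℚ) * ((n : ℚ) + 1) := by exact_mod_cast q1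
  have Q2 : ((2 : ℚ) * n + 3) * ((2 * n + 2).choose (n + 1) : ℚ)
      = ((2 * n + 3).choose (n + 1 + 1) : ℚ) * ((n : ℚ) + 2) := by exact_mod_cast q2
  have Q4 : ((n : ℚ) + 2) * (catalan (n + 1) : ℚ) = ((2 * n + 2).choose (n + 1) : ℚ) := by
    exact_mod_cast q4
  set c1 : ℚ := ((2 * n + 1).choose n : ℚ)
  set c2 : ℚ := ((2 * n + 2).choose (n + 1) : ℚ)
  set c3 : ℚ := ((2 * n + 3).choose (n + 1 + 1) : ℚ)
  set t : ℚ := (catalan (n + 1) : ℚ)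
  push_cast
  field_simp
  have hc1 : 2 * c1 = c2 := by
    have hn1 : ((n : ℚ) + 1) ≠ 0 := by positivity
    apply mul_left_cancel₀ hn1
    linear_combination Q1
  have hn2 : ((n : ℚ) + 2) ≠ 0 := by positivity
  apply mul_left_cancel₀ hn2
  linear_combination ((n : ℚ) + 2) * t * (2 * (n : ℚ) + 3) ^ 2 * hc1
    + (2 * (n : ℚ) + 3) ^ 2 * c2 * Q4 + ((2 * (n : ℚ) + 3) * c2 + c3 * ((n : ℚ) + 2)) * Q2
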